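/- Let P be a training set in EuclideanSpace ℝ (Fin d), and let p₁, …, pₙ be an enumeration of P with d_ne(p₁) ≤ ⋯ ≤ d_ne(pₙ). Define R₀ = ∅ and, for i = 1, …, n, Rᵢ = Rᵢ₋₁ ∪ {pᵢ} if ‖pᵢ − r‖ ≥ d_ne(pᵢ) for every r ∈ Rᵢ₋₁, and Rᵢ = Rᵢ₋₁ otherwise; set RSS = Rₙ. Then RSS is a selective subset of P: for every p ∈ P there exists r ∈ RSS with ‖p − r‖ < d_ne(p). -/
import Mathlib


/-- The nearest-enemy distance of `p`: the minimum of `‖p - q‖` over enemies `q` of `p`. -/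
noncomputable def dne {d : ℕ} {Λ : Type*} (P : Finset (EuclideanSpace ℝ (Fin d)))
    (l : EuclideanSpace ℝ (Fin d) → Λ) (p : EuclideanSpace ℝ (Fin d)) : ℝ :=
  sInf {r : ℝ | ∃ q ∈ P, l q ≠ l p ∧ r = ‖p - q‖}

lemma dne_pos {d : ℕ} {Λ : Type*} (P : Finset (EuclideanSpace ℝ (Fin d)))
    (l : EuclideanSpace ℝ (Fin d) → Λ) (q : EuclideanSpace ℝ (Fin d))
    (h : ∃ q' ∈ P, l q' ≠ l q) : 0 < dne P l q := by
  set S : Set ℝ := {r : ℝ | ∃ q' ∈ P, l q' ≠ l q ∧ r = ‖q - q'‖} with hS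
  have hfin : S.Finite := by
    apply Set.Finite.subset ((P : Set (EuclideanSpace ℝ (Fin d))).toFinite.image
      (fun q' => ‖q - q'‖))
    rintro r ⟨q', hq', _, rfl⟩
    exact ⟨q', hq', rfl⟩
  have hne : S.Nonempty := by
    obtain ⟨q', hq', hl⟩ := h
    exact ⟨‖q - q'‖, q', hq', hl, rfl⟩
  have hmem : sInf S ∈ S := hne.csInf_mem hfin
  obtain ⟨q', _, hl, heq⟩ := hmem
  rw [dne, ← hS, heq]
  have : q ≠ q' := fun h => hl (by rw [h])
  simpa [sub_eq_zero] using this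

open Classical in
/-- The greedy RSS procedure, run on an enumeration `p₁, …, pₙ` of `P` sorted in
nondecreasing order of nearest-enemy distance, produces a selective subset of `P`. -/
theorem rss_selective {d n : ℕ} {Λ : Type*}
    (P : Finset (EuclideanSpace ℝ (Fin d))) (l : EuclideanSpace ℝ (Fin d) → Λ)
    (hP : ∀ p ∈ P, ∃ q ∈ P, l q ≠ l p)
    (p : Fin n → EuclideanSpace ℝ (Fin d))
    (hinj : Function.Injective p)
    (henum : ∀ x, x ∈ P ↔ ∃ i, p i = x)
    (hsort : ∀ i j : Fin n, i ≤ j → dne P l (p i) ≤ dne P l (p j))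
    (R : ℕ → Finset (EuclideanSpace ℝ (Fin d)))
    (hR0 : R 0 = ∅)
    (hadd : ∀ i : Fin n, (∀ r ∈ R i.1, dne P l (p i) ≤ ‖p i - r‖) →
      R (i.1 + 1) = insert (p i) (R i.1))
    (hskip : ∀ i : Fin n, ¬ (∀ r ∈ R i.1, dne P l (p i) ≤ ‖p i - r‖) →
      R (i.1 + 1) = R i.1) :
    ∀ q ∈ P, ∃ r ∈ R n, ‖q - r‖ < dne P l q := by
  have hstep : ∀ k : ℕ, k < n → R k ⊆ R (k + 1) := by
    intro k hk
    by_cases hc : ∀ r ∈ R k, dne P l (p ⟨k, hk⟩) ≤ ‖p ⟨k, hk⟩ - r‖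
    · rw [hadd ⟨k, hk⟩ hc]; exact Finset.subset_insert _ _
    · rw [hskip ⟨k, hk⟩ hc]
  have hmono : ∀ a b : ℕ, a ≤ b → b ≤ n → R a ⊆ R b := by
    intro a b hab hbn
    induction b with
    | zero => simpa [Nat.le_zero.mp hab] using Finset.Subset.refl _
    | succ m ih =>
      rcases Nat.lt_or_ge a (m + 1) with h | h
      · exact (ih (Nat.lt_succ_iff.mp h) (le_trans (Nat.le_succ m) hbn)).trans
          (hstep m (Nat.lt_of_succ_le hbn))
      · have : a = m + 1 := le_antisymm hab h
        subst this; exact Finset.Subset.refl _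
  intro q hq
  obtain ⟨i, rfl⟩ := (henum q).mp hq
  by_cases hc : ∀ r ∈ R i.1, dne P l (p i) ≤ ‖p i - r‖
  · refine ⟨p i, ?_, ?_⟩
    · have : p i ∈ R (i.1 + 1) := by
        rw [hadd i hc]; exact Finset.mem_insert_self _ _
      exact hmono (i.1 + 1) n i.2 le_rfl this
    · simpa using dne_pos P l (p i) (hP _ hq)
  · push_neg at hc
    obtain ⟨r, hr, hlt⟩ := hc
    exact ⟨r, hmono i.1 n (Nat.le_of_lt i.2) le_rfl hr, hlt⟩
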